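/- In the affine hyperplane arrangement of type C_n, the projection π(v) = Σ_{j≠ℓ} ⟨v,ε_j⟩ε_j + ⌈k/(2n)⌉ε_ℓ of ℝ^n onto the hyperplane H = {v : ⟨v,ε_ℓ⟩ = ⌈k/(2n)⌉}, followed by the identification of H with ℝ^{n−1} via the basis {ε_j : j ≠ ℓ}, maps every alcove of the type C_n affine arrangement to an alcove of the type C_{n−1} affine arrangement. -/

import Mathlib

/-! The affine hyperplane arrangement of type `Cₙ` in `ℝⁿ = Fin n → ℝ`. -/

noncomputable def dotp (n : ℕ) (x y : Fin n → ℝ) : ℝ := ∑ i, x i * y i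

def stdBasis (n : ℕ) (i : Fin n) : Fin n → ℝ := fun j => if j = i then 1 else 0

/-- The positive roots of type `Cₙ`: `2εᵢ` and `εᵢ ± εⱼ` for `i < j`. -/
def PosRoot (n : ℕ) : Set (Fin n → ℝ) :=
  {α | (∃ i, α = (2 : ℝ) • stdBasis n i) ∨
       (∃ i j : Fin n, i < j ∧ (α = stdBasis n i + stdBasis n j ∨ α = stdBasis n i - stdBasis n j))}

/-- The complement of the affine arrangement `{x : (x, α) = m}`, `α` a positive root, `m ∈ ℤ`. -/
def ArrComp (n : ℕ) : Set (Fin n → ℝ) :=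
  {x | ∀ α ∈ PosRoot n, ∀ m : ℤ, dotp n x α ≠ (m : ℝ)}

/-- An alcove is a connected component of the complement of the arrangement. -/
def IsAlcove (n : ℕ) (A : Set (Fin n → ℝ)) : Prop :=
  ∃ x ∈ ArrComp n, A = connectedComponentIn (ArrComp n) x

/-- The translate by `p` of the fundamental region (the closed cube of side 1 around `p`). -/
def cube (n : ℕ) (p : Fin n → ℝ) : Set (Fin n → ℝ) := {x | ∀ i, |x i - p i| ≤ 1/2}

/-- The fundamental alcove: `0 < (x, α) < 1` for every positive root `α`. -/
def FundAlcove (n : ℕ) : Set (Fin n → ℝ) :=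
  {x | ∀ α ∈ PosRoot n, 0 < dotp n x α ∧ dotp n x α < 1}

/-- The hyperplane `{x : (x, α) = m}` separates `A` and `B`. -/
def Separates (n : ℕ) (α : Fin n → ℝ) (m : ℤ) (A B : Set (Fin n → ℝ)) : Prop :=
  ((∀ x ∈ A, dotp n x α < (m : ℝ)) ∧ (∀ x ∈ B, (m : ℝ) < dotp n x α)) ∨
  ((∀ x ∈ B, dotp n x α < (m : ℝ)) ∧ (∀ x ∈ A, (m : ℝ) < dotp n x α))

/-- The number of arrangement hyperplanes separating `A` from `B`. -/
noncomputable def sepCount (n : ℕ) (A B : Set (Fin n → ℝ)) : ℕ :=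
  Nat.card {q : (Fin n → ℝ) × ℤ | q.1 ∈ PosRoot n ∧ Separates n q.1 q.2 A B}

def rget (n : ℕ) (x : Fin n → ℝ) (i : ℕ) : ℝ := if h : i < n then x ⟨i, h⟩ else 0

/-- Orthogonal projection onto the hyperplane `{v : v (ℓ-1) = c}` (1-indexed coordinate `ℓ`). -/
def piMap (n : ℕ) (ℓ : ℕ) (c : ℝ) (x : Fin n → ℝ) : Fin n → ℝ :=
  fun j => if j.val = ℓ - 1 then c else x j

/-- Identification of the hyperplane with `ℝⁿ⁻¹` via the basis `{εⱼ : j ≠ ℓ}`: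
delete the (1-indexed) `ℓ`-th coordinate. -/
def delCoordR (n : ℕ) (ℓ : ℕ) (x : Fin n → ℝ) : Fin (n-1) → ℝ :=
  fun t => rget n x (if t.val < ℓ - 1 then t.val else t.val + 1)

/-- Points of the open chain region `1/2 > x₀ > x₁ > ⋯ > x_{n-1} > 0`. -/
def ChainSet (n : ℕ) : Set (Fin n → ℝ) :=
  {x | rget n x 0 < 1/2 ∧ (∀ i j : Fin n, i < j → x j < x i) ∧ 0 < rget n x (n-1)}

namespace Stmt8A
noncomputable def tmod (z : ℝ) : ℝ := min (Int.fract z) (1 - Int.fract z)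

lemma tmod_cases (z w : ℝ) (h : tmod z = tmod w) :
    ∃ m : ℤ, z - w = m ∨ z + w = m := by
  have fz : Int.fract z = z - ⌊z⌋ := rfl
  have fw : Int.fract w = w - ⌊w⌋ := rfl
  unfold tmod at h
  rcases min_cases (Int.fract z) (1 - Int.fract z) with ⟨h1, _⟩ | ⟨h1, _⟩ <;>
    rcases min_cases (Int.fract w) (1 - Int.fract w) with ⟨h2, _⟩ | ⟨h2, _⟩ <;>
    rw [h1, h2] at h
  · exact ⟨⌊z⌋ - ⌊w⌋, Or.inl (by push_cast; rw [fz, fw] at h; linarith)⟩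
  · exact ⟨⌊z⌋ + ⌊w⌋ + 1, Or.inr (by push_cast; rw [fz, fw] at h; linarith)⟩
  · exact ⟨⌊z⌋ + ⌊w⌋ + 1, Or.inr (by push_cast; rw [fz, fw] at h; linarith)⟩
  · exact ⟨⌊z⌋ - ⌊w⌋, Or.inl (by push_cast; rw [fz, fw] at h; linarith)⟩

lemma tmod_add_int (z : ℝ) (m : ℤ) : tmod (z + m) = tmod z := by
  unfold tmod; rw [Int.fract_add_intCast]

lemma tmod_neg (z : ℝ) : tmod (-z) = tmod z := by
  rcases eq_or_ne (Int.fract z) 0 with h | h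
  · have hz : z = (⌊z⌋ : ℝ) := by
      have : Int.fract z = z - ⌊z⌋ := rfl
      rw [this] at h; linarith
    have h2 : Int.fract (-z) = 0 := by
      rw [hz, ← Int.cast_neg, Int.fract_intCast]
    unfold tmod; rw [h, h2]
  · unfold tmod; rw [Int.fract_neg h, sub_sub_cancel, min_comm]

lemma tmod_eq_of_sub (z w : ℝ) (m : ℤ) (h : z - w = m) : tmod z = tmod w := by
  have : z = w + m := by linarith
  rw [this, tmod_add_int]

lemma tmod_eq_of_add (z w : ℝ) (m : ℤ) (h : z + w = m) : tmod z = tmod w := by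
  have : z = -w + m := by linarith
  rw [this, tmod_add_int, tmod_neg]

/-- affine model of `tmod` on the strip `b < 2z < b+1`. -/
noncomputable def aff (b : ℤ) (z : ℝ) : ℝ := if Even b then z - b/2 else (b+1)/2 - z

lemma strip_tmod {b : ℤ} {z : ℝ} (h1 : (b:ℝ) < 2*z) (h2 : 2*z < b+1) :
    tmod z = aff b z := by
  unfold aff
  by_cases hb : Even b
  · obtain ⟨a, rfl⟩ := hb
    rw [if_pos ⟨a, rfl⟩]
    push_cast at h1 h2 ⊢
    have hfl : ⌊z⌋ = a := by
      rw [Int.floor_eq_iff]; constructor <;> [push_cast; push_cast] <;> linarith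
    have hf : Int.fract z = z - a := by
      rw [Int.fract, hfl]
    unfold tmod; rw [hf, min_eq_left (by linarith)]; ring
  · obtain ⟨a, rfl⟩ := Int.not_even_iff_odd.mp hb
    rw [if_neg (by simpa using hb)]
    push_cast at h1 h2 ⊢
    have hfl : ⌊z⌋ = a := by
      rw [Int.floor_eq_iff]; constructor <;> [push_cast; push_cast] <;> linarith
    have hf : Int.fract z = z - a := by
      rw [Int.fract, hfl]
    unfold tmod; rw [hf, min_eq_right (by linarith)]; ring

lemma strip_bounds {b : ℤ} {z : ℝ} (h1 : (b:ℝ) < 2*z) (h2 : 2*z < b+1) :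
    0 < aff b z ∧ aff b z < 1/2 := by
  unfold aff
  by_cases hb : Even b
  · obtain ⟨a, rfl⟩ := hb
    rw [if_pos ⟨a, rfl⟩]; push_cast at *; constructor <;> linarith
  · obtain ⟨a, rfl⟩ := Int.not_even_iff_odd.mp hb
    rw [if_neg (by simpa using hb)]; push_cast at *; constructor <;> linarith

lemma aff_combo (b : ℤ) (p q z z' : ℝ) (hpq : p + q = 1) :
    aff b (p*z + q*z') = p * aff b z + q * aff b z' := by
  have hq : q = 1 - p := by linarith
  subst hq; unfold aff; split <;> ring

lemma combo_lt_combo {p q u v u' v' : ℝ} (hp : 0 ≤ p) (hq : 0 ≤ q) (hpq : p + q = 1)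
    (h1 : u < u') (h2 : v < v') : p*u + q*v < p*u' + q*v' := by
  rcases hp.eq_or_lt with h | h
  · subst h; have : q = 1 := by linarith
    subst this; simpa using h2
  · exact add_lt_add_of_lt_of_le ((mul_lt_mul_iff_right₀ h).2 h1)
      (mul_le_mul_of_nonneg_left h2.le hq)

lemma combo_lt {p q u v c : ℝ} (hp : 0 ≤ p) (hq : 0 ≤ q) (hpq : p + q = 1)
    (h1 : u < c) (h2 : v < c) : p*u + q*v < c := by
  have := combo_lt_combo hp hq hpq h1 h2
  have hc : p*c + q*c = c := by rw [← add_mul, hpq, one_mul]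
  linarith

lemma combo_gt {p q u v c : ℝ} (hp : 0 ≤ p) (hq : 0 ≤ q) (hpq : p + q = 1)
    (h1 : c < u) (h2 : c < v) : c < p*u + q*v := by
  have := combo_lt_combo hp hq hpq h1 h2
  have hc : p*c + q*c = c := by rw [← add_mul, hpq, one_mul]
  linarith
end Stmt8A

namespace Stmt8A

lemma dotp_basis (n : ℕ) (x : Fin n → ℝ) (i : Fin n) :
    dotp n x (stdBasis n i) = x i := by
  simp [dotp, stdBasis, mul_ite]

lemma dotp_two (n : ℕ) (x : Fin n → ℝ) (i : Fin n) :
    dotp n x ((2:ℝ) • stdBasis n i) = 2 * x i := by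
  simp [dotp, stdBasis, mul_ite, Finset.mul_sum]
  ring

lemma dotp_add (n : ℕ) (x : Fin n → ℝ) (i j : Fin n) :
    dotp n x (stdBasis n i + stdBasis n j) = x i + x j := by
  simp [dotp, mul_add, Finset.sum_add_distrib, ← dotp_basis n x i, ← dotp_basis n x j]

lemma dotp_sub (n : ℕ) (x : Fin n → ℝ) (i j : Fin n) :
    dotp n x (stdBasis n i - stdBasis n j) = x i - x j := by
  simp [dotp, mul_sub, Finset.sum_sub_distrib, ← dotp_basis n x i, ← dotp_basis n x j]

lemma arr_two {n : ℕ} {x : Fin n → ℝ} (hx : x ∈ ArrComp n) (i : Fin n) (m : ℤ) :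
    2 * x i ≠ (m : ℝ) := by
  have := hx ((2:ℝ) • stdBasis n i) (Or.inl ⟨i, rfl⟩) m
  rwa [dotp_two] at this

lemma arr_add {n : ℕ} {x : Fin n → ℝ} (hx : x ∈ ArrComp n) {i j : Fin n} (hij : i ≠ j)
    (m : ℤ) : x i + x j ≠ (m : ℝ) := by
  rcases hij.lt_or_gt with h | h
  · have := hx (stdBasis n i + stdBasis n j) (Or.inr ⟨i, j, h, Or.inl rfl⟩) m
    rwa [dotp_add] at this
  · have := hx (stdBasis n j + stdBasis n i) (Or.inr ⟨j, i, h, Or.inl rfl⟩) m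
    rw [dotp_add] at this
    intro hcon; exact this (by linarith)

lemma arr_sub {n : ℕ} {x : Fin n → ℝ} (hx : x ∈ ArrComp n) {i j : Fin n} (hij : i ≠ j)
    (m : ℤ) : x i - x j ≠ (m : ℝ) := by
  rcases hij.lt_or_gt with h | h
  · have := hx (stdBasis n i - stdBasis n j) (Or.inr ⟨i, j, h, Or.inr rfl⟩) m
    rwa [dotp_sub] at this
  · have := hx (stdBasis n j - stdBasis n i) (Or.inr ⟨j, i, h, Or.inr rfl⟩) (-m)
    rw [dotp_sub] at this
    intro hcon; exact this (by push_cast; linarith)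

lemma arr_tmod_ne {n : ℕ} {x : Fin n → ℝ} (hx : x ∈ ArrComp n) {i j : Fin n} (hij : i ≠ j) :
    tmod (x i) ≠ tmod (x j) := by
  intro h
  obtain ⟨m, hm | hm⟩ := tmod_cases _ _ h
  · exact arr_sub hx hij m hm
  · exact arr_add hx hij m hm

/-- The combinatorial region of a point: same strips `⌊2xᵢ⌋ < 2yᵢ < ⌊2xᵢ⌋+1`, and same
relative order of the distances to the nearest integer. -/
def Reg (n : ℕ) (x : Fin n → ℝ) : Set (Fin n → ℝ) :=
  {y | (∀ i, ((⌊2*x i⌋:ℝ) < 2*y i ∧ 2*y i < ⌊2*x i⌋+1)) ∧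
       ∀ i j, tmod (x i) < tmod (x j) → aff ⌊2*x i⌋ (y i) < aff ⌊2*x j⌋ (y j)}

lemma arr_strip {n : ℕ} {x : Fin n → ℝ} (hx : x ∈ ArrComp n) (i : Fin n) :
    (⌊2*x i⌋:ℝ) < 2*x i ∧ 2*x i < ⌊2*x i⌋+1 := by
  have h2 : (2:ℝ) * x i ≠ (⌊2 * x i⌋ : ℝ) := arr_two hx i _
  have hfl := Int.floor_le (2 * x i)
  have hfl2 := Int.lt_floor_add_one (2 * x i)
  exact ⟨lt_of_le_of_ne hfl (Ne.symm h2), by push_cast; linarith⟩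

lemma mem_reg_self {n : ℕ} {x : Fin n → ℝ} (hx : x ∈ ArrComp n) : x ∈ Reg n x := by
  refine ⟨arr_strip hx, fun i j h => ?_⟩
  rw [← strip_tmod (arr_strip hx i).1 (arr_strip hx i).2,
      ← strip_tmod (arr_strip hx j).1 (arr_strip hx j).2]
  exact h

lemma reg_subset {n : ℕ} {x : Fin n → ℝ} (hx : x ∈ ArrComp n) : Reg n x ⊆ ArrComp n := by
  rintro y ⟨hs, ho⟩ α hα m
  have hstrip : ∀ i : Fin n, (⌊2*x i⌋:ℝ) < 2*y i ∧ 2*y i < ⌊2*x i⌋+1 := hs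
  have htm : ∀ i j : Fin n, i ≠ j → tmod (y i) ≠ tmod (y j) := by
    intro i j hij heq
    rcases (arr_tmod_ne hx hij).lt_or_gt with h | h
    · have := ho i j h
      rw [← strip_tmod (hstrip i).1 (hstrip i).2, ← strip_tmod (hstrip j).1 (hstrip j).2] at this
      exact absurd heq this.ne
    · have := ho j i h
      rw [← strip_tmod (hstrip i).1 (hstrip i).2, ← strip_tmod (hstrip j).1 (hstrip j).2] at this
      exact absurd heq.symm this.ne
  rcases hα with ⟨i, rfl⟩ | ⟨i, j, hij, rfl | rfl⟩
  · rw [dotp_two]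
    intro hcon
    have h1 := (hstrip i).1
    have h2 := (hstrip i).2
    rw [hcon] at h1 h2
    have : ⌊2*x i⌋ < m := by exact_mod_cast h1
    have : m < ⌊2*x i⌋ + 1 := by exact_mod_cast h2
    omega
  · rw [dotp_add]
    intro hcon
    exact htm i j hij.ne (tmod_eq_of_add _ _ m hcon)
  · rw [dotp_sub]
    intro hcon
    exact htm i j hij.ne (tmod_eq_of_sub _ _ m hcon)

end Stmt8A

namespace Stmt8A

lemma aff_continuous (b : ℤ) : Continuous (aff b) := by
  unfold aff; split
  · exact (continuous_id.sub continuous_const)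
  · exact (continuous_const.sub continuous_id)

lemma reg_isOpen {n : ℕ} (x : Fin n → ℝ) : IsOpen (Reg n x) := by
  have h1 : Reg n x = (⋂ i : Fin n, {y : Fin n → ℝ | (⌊2*x i⌋:ℝ) < 2*y i} ∩
      {y | 2*y i < ⌊2*x i⌋+1}) ∩
      ⋂ i : Fin n, ⋂ j : Fin n, ⋂ _h : tmod (x i) < tmod (x j),
        {y : Fin n → ℝ | aff ⌊2*x i⌋ (y i) < aff ⌊2*x j⌋ (y j)} := by
    ext y
    simp only [Reg, Set.mem_inter_iff, Set.mem_iInter, Set.mem_setOf_eq, Set.mem_sep_iff]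
  rw [h1]
  apply IsOpen.inter
  · exact isOpen_iInter_of_finite fun i =>
      (isOpen_lt continuous_const ((continuous_const.mul (continuous_apply i)))).inter
      (isOpen_lt ((continuous_const.mul (continuous_apply i))) continuous_const)
  · exact isOpen_iInter_of_finite fun i => isOpen_iInter_of_finite fun j =>
      isOpen_iInter_of_finite fun _ =>
        isOpen_lt ((aff_continuous _).comp (continuous_apply i))
          ((aff_continuous _).comp (continuous_apply j))

lemma reg_convex {n : ℕ} (x : Fin n → ℝ) : Convex ℝ (Reg n x) := by
  rintro y hy z hz p q hp hq hpq
  refine ⟨fun i => ?_, fun i j h => ?_⟩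
  · have h1 := (hy.1 i); have h2 := (hz.1 i)
    have e : 2 * (p • y + q • z) i = p * (2 * y i) + q * (2 * z i) := by
      simp [Pi.add_apply, Pi.smul_apply, smul_eq_mul]; ring
    rw [e]
    exact ⟨combo_gt hp hq hpq h1.1 h2.1, combo_lt hp hq hpq h1.2 h2.2⟩
  · have h1 := hy.2 i j h; have h2 := hz.2 i j h
    have e1 : (p • y + q • z) i = p * y i + q * z i := by
      simp [Pi.add_apply, Pi.smul_apply, smul_eq_mul]
    have e2 : (p • y + q • z) j = p * y j + q * z j := by
      simp [Pi.add_apply, Pi.smul_apply, smul_eq_mul]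
    rw [e1, e2, aff_combo _ _ _ _ _ hpq, aff_combo _ _ _ _ _ hpq]
    exact combo_lt_combo hp hq hpq h1 h2

lemma reg_eq_of_mem {n : ℕ} {x z : Fin n → ℝ} (hx : x ∈ ArrComp n) (hz : z ∈ Reg n x) :
    Reg n z = Reg n x := by
  obtain ⟨hs, ho⟩ := hz
  have hfl : ∀ i, ⌊2*z i⌋ = ⌊2*x i⌋ := by
    intro i
    rw [Int.floor_eq_iff]
    refine ⟨(hs i).1.le, by push_cast; exact (hs i).2⟩
  have hto : ∀ i j, tmod (z i) < tmod (z j) ↔ tmod (x i) < tmod (x j) := by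
    intro i j
    constructor
    · intro h
      rcases eq_or_ne i j with rfl | hij
      · exact absurd h (lt_irrefl _)
      rcases (arr_tmod_ne hx hij).lt_or_gt with h' | h'
      · exact h'
      · have := ho j i h'
        rw [← strip_tmod (hs i).1 (hs i).2, ← strip_tmod (hs j).1 (hs j).2] at this
        exact absurd h (not_lt.mpr this.le)
    · intro h
      have := ho i j h
      rw [← strip_tmod (hs i).1 (hs i).2, ← strip_tmod (hs j).1 (hs j).2] at this
      exact this
  ext y
  constructor
  · rintro ⟨hs', ho'⟩
    refine ⟨fun i => by rw [← hfl i]; exact hs' i, fun i j h => ?_⟩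
    have := ho' i j ((hto i j).mpr h)
    rwa [hfl i, hfl j] at this
  · rintro ⟨hs', ho'⟩
    refine ⟨fun i => by rw [hfl i]; exact hs' i, fun i j h => ?_⟩
    have := ho' i j ((hto i j).mp h)
    rwa [← hfl i, ← hfl j] at this

end Stmt8A

namespace Stmt8A

lemma reg_inter_empty {n : ℕ} {x x' : Fin n → ℝ} (hx : x ∈ ArrComp n) (hx' : x' ∈ ArrComp n)
    (h : x' ∉ Reg n x) : Reg n x ∩ Reg n x' = ∅ := by
  by_contra hne
  obtain ⟨z, hz1, hz2⟩ := Set.nonempty_iff_ne_empty.mpr hne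
  have h1 : Reg n z = Reg n x := reg_eq_of_mem hx hz1
  have h2 : Reg n z = Reg n x' := reg_eq_of_mem hx' hz2
  exact h (h1 ▸ h2 ▸ mem_reg_self hx')

lemma comp_eq_reg {n : ℕ} {x : Fin n → ℝ} (hx : x ∈ ArrComp n) :
    connectedComponentIn (ArrComp n) x = Reg n x := by
  apply Set.Subset.antisymm
  · set U : Set (Fin n → ℝ) :=
      ⋃ x' ∈ {x' | x' ∈ ArrComp n ∧ x' ∉ Reg n x}, Reg n x' with hU
    have hUopen : IsOpen U := isOpen_biUnion fun x' _ => reg_isOpen x'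
    have hcover : ArrComp n ⊆ Reg n x ∪ U := by
      intro x' hx'
      by_cases h : x' ∈ Reg n x
      · exact Or.inl h
      · exact Or.inr (Set.mem_biUnion ⟨hx', h⟩ (mem_reg_self hx'))
    have hdisj : Reg n x ∩ U = ∅ := by
      rw [Set.eq_empty_iff_forall_notMem]
      rintro z ⟨hz1, hz2⟩
      obtain ⟨x', hx'mem, hz3⟩ := Set.mem_iUnion₂.mp hz2
      have := reg_inter_empty hx hx'mem.1 hx'mem.2
      rw [Set.eq_empty_iff_forall_notMem] at this
      exact this z ⟨hz1, hz3⟩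
    have hC := isPreconnected_connectedComponentIn (F := ArrComp n) (x := x)
    have hsub : connectedComponentIn (ArrComp n) x ⊆ ArrComp n := connectedComponentIn_subset _ _
    intro z hz
    by_contra hzreg
    have hzU : z ∈ U := by
      rcases hcover (hsub hz) with h | h
      · exact absurd h hzreg
      · exact h
    have hne := hC (Reg n x) U (reg_isOpen x) hUopen
      (fun w hw => hcover (hsub hw))
      ⟨x, mem_connectedComponentIn hx, mem_reg_self hx⟩
      ⟨z, hz, hzU⟩
    obtain ⟨w, _, hw2⟩ := hne
    rw [Set.eq_empty_iff_forall_notMem] at hdisj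
    exact hdisj w hw2
  · exact (reg_convex x).isPreconnected.subset_connectedComponentIn (mem_reg_self hx)
      (reg_subset hx)

end Stmt8A

namespace Stmt8A

def emb (n ℓ : ℕ) (t : Fin (n-1)) : Fin n :=
  ⟨if t.val < ℓ - 1 then t.val else t.val + 1, by have := t.isLt; split <;> omega⟩

def inv (n ℓ : ℕ) (hn : 2 ≤ n) (h2 : ℓ ≤ n) (i : Fin n) : Fin (n-1) :=
  ⟨if i.val < ℓ - 1 then i.val else i.val - 1, by have := i.isLt; split <;> omega⟩

lemma emb_ne (n ℓ : ℕ) (t : Fin (n-1)) : (emb n ℓ t).val ≠ ℓ - 1 := by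
  simp only [emb]; split <;> omega

lemma emb_lt (n ℓ : ℕ) {t s : Fin (n-1)} (h : t < s) : emb n ℓ t < emb n ℓ s := by
  simp only [Fin.lt_def, emb] at h ⊢
  split_ifs <;> omega

lemma emb_ne_of_ne (n ℓ : ℕ) {t s : Fin (n-1)} (h : t ≠ s) : emb n ℓ t ≠ emb n ℓ s := by
  rcases h.lt_or_gt with h' | h'
  · exact (emb_lt n ℓ h').ne
  · exact (emb_lt n ℓ h').ne'

lemma inv_emb (n ℓ : ℕ) (hn : 2 ≤ n) (h2 : ℓ ≤ n) (t : Fin (n-1)) :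
    inv n ℓ hn h2 (emb n ℓ t) = t := by
  apply Fin.ext
  simp only [inv, emb]
  split_ifs <;> omega

lemma emb_inv (n ℓ : ℕ) (hn : 2 ≤ n) (h1 : 1 ≤ ℓ) (h2 : ℓ ≤ n) (i : Fin n)
    (h : i.val ≠ ℓ - 1) : emb n ℓ (inv n ℓ hn h2 i) = i := by
  apply Fin.ext
  simp only [inv, emb]
  split_ifs <;> omega

lemma phi_apply (n ℓ : ℕ) (c : ℝ) (x : Fin n → ℝ) (t : Fin (n-1)) :
    delCoordR n ℓ (piMap n ℓ c x) t = x (emb n ℓ t) := by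
  show rget n (piMap n ℓ c x) (emb n ℓ t).val = _
  rw [rget, dif_pos (emb n ℓ t).isLt]
  show piMap n ℓ c x (emb n ℓ t) = _
  rw [piMap]
  exact if_neg (emb_ne n ℓ t)

lemma proj_mem {n ℓ : ℕ} {x : Fin n → ℝ} (hx : x ∈ ArrComp n) :
    (fun t => x (emb n ℓ t)) ∈ ArrComp (n-1) := by
  rintro α (⟨i, rfl⟩ | ⟨i, j, hij, rfl | rfl⟩) m
  · rw [dotp_two]; exact arr_two hx _ m
  · rw [dotp_add]; exact arr_add hx (emb_ne_of_ne n ℓ hij.ne) m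
  · rw [dotp_sub]; exact arr_sub hx (emb_ne_of_ne n ℓ hij.ne) m

end Stmt8A

namespace Stmt8A

lemma image_reg (n ℓ : ℕ) (hn : 2 ≤ n) (h1 : 1 ≤ ℓ) (h2 : ℓ ≤ n) (x₀ : Fin n → ℝ) :
    (fun (x : Fin n → ℝ) (t : Fin (n-1)) => x (emb n ℓ t)) '' Reg n x₀ =
      Reg (n-1) (fun t => x₀ (emb n ℓ t)) := by
  classical
  apply Set.Subset.antisymm
  · rintro _ ⟨y, ⟨hs, ho⟩, rfl⟩
    exact ⟨fun t => hs (emb n ℓ t), fun t s h => ho (emb n ℓ t) (emb n ℓ s) h⟩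
  · rintro w ⟨hs, ho⟩
    set iℓ : Fin n := ⟨ℓ - 1, by omega⟩ with hiℓ
    set b : ℤ := ⌊2 * x₀ iℓ⌋ with hb
    set T0 : ℝ := tmod (x₀ iℓ) with hT0
    set val : Fin (n-1) → ℝ := fun t => aff ⌊2 * x₀ (emb n ℓ t)⌋ (w t) with hval
    -- val t = tmod (w t) ∈ (0, 1/2)
    have hvb : ∀ t, 0 < val t ∧ val t < 1/2 := fun t => strip_bounds (hs t).1 (hs t).2
    set Lv : Finset ℝ :=
      insert 0 ((Finset.univ.filter fun t => tmod (x₀ (emb n ℓ t)) < T0).image val) with hLv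
    set Uv : Finset ℝ :=
      insert (1/2) ((Finset.univ.filter fun t => T0 < tmod (x₀ (emb n ℓ t))).image val) with hUv
    have hLne : Lv.Nonempty := ⟨0, Finset.mem_insert_self _ _⟩
    have hUne : Uv.Nonempty := ⟨1/2, Finset.mem_insert_self _ _⟩
    set maxL := Lv.max' hLne with hmaxL
    set minU := Uv.min' hUne with hminU
    have hLU : ∀ a ∈ Lv, ∀ c' ∈ Uv, a < c' := by
      intro a ha c' hc'
      rcases Finset.mem_insert.mp ha with rfl | ha
      · rcases Finset.mem_insert.mp hc' with rfl | hc'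
        · norm_num
        · obtain ⟨s, _, rfl⟩ := Finset.mem_image.mp hc'
          exact (hvb s).1
      · obtain ⟨t, htf, rfl⟩ := Finset.mem_image.mp ha
        rcases Finset.mem_insert.mp hc' with rfl | hc'
        · exact (hvb t).2
        · obtain ⟨s, hsf, rfl⟩ := Finset.mem_image.mp hc'
          have ht' := (Finset.mem_filter.mp htf).2
          have hs' := (Finset.mem_filter.mp hsf).2
          exact ho t s (ht'.trans hs')
    have hLltU : maxL < minU := hLU _ (Lv.max'_mem hLne) _ (Uv.min'_mem hUne)
    set τ : ℝ := (maxL + minU)/2 with hτ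
    have hmaxτ : maxL < τ := by rw [hτ]; linarith
    have hτmin : τ < minU := by rw [hτ]; linarith
    have hτ0 : 0 < τ := lt_of_le_of_lt (Lv.le_max' 0 (Finset.mem_insert_self _ _)) hmaxτ
    have hτh : τ < 1/2 := lt_of_lt_of_le hτmin (Uv.min'_le _ (Finset.mem_insert_self _ _))
    set z : ℝ := if Even b then (b:ℝ)/2 + τ else ((b:ℝ)+1)/2 - τ with hz
    have hzs : (b:ℝ) < 2*z ∧ 2*z < (b:ℝ)+1 ∧ aff b z = τ := by
      rw [hz]; unfold aff
      by_cases hbev : Even b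
      · simp only [if_pos hbev]
        refine ⟨by linarith, by linarith, by ring⟩
      · simp only [if_neg hbev]
        refine ⟨by linarith, by linarith, by ring⟩
    set y : Fin n → ℝ := fun i => if h : i.val = ℓ - 1 then z else w (inv n ℓ hn h2 i) with hy
    have hyemb : ∀ t, y (emb n ℓ t) = w t := by
      intro t
      rw [hy]
      simp only [dif_neg (emb_ne n ℓ t)]
      rw [inv_emb]
    have hyiℓ : y iℓ = z := by rw [hy]; exact dif_pos rfl
    -- membership helpers
    have hmemL : ∀ t, tmod (x₀ (emb n ℓ t)) < T0 → val t ≤ maxL := by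
      intro t ht
      exact Lv.le_max' _ (Finset.mem_insert_of_mem
        (Finset.mem_image.mpr ⟨t, Finset.mem_filter.mpr ⟨Finset.mem_univ _, ht⟩, rfl⟩))
    have hmemU : ∀ t, T0 < tmod (x₀ (emb n ℓ t)) → minU ≤ val t := by
      intro t ht
      exact Uv.min'_le _ (Finset.mem_insert_of_mem
        (Finset.mem_image.mpr ⟨t, Finset.mem_filter.mpr ⟨Finset.mem_univ _, ht⟩, rfl⟩))
    refine ⟨y, ⟨fun i => ?_, fun i j hlt => ?_⟩, funext fun t => hyemb t⟩
    · by_cases hi : i.val = ℓ - 1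
      · have : i = iℓ := by apply Fin.ext; exact hi
        subst this
        rw [hyiℓ, ← hb]
        exact ⟨hzs.1, by push_cast; exact hzs.2.1⟩
      · have hrw : emb n ℓ (inv n ℓ hn h2 i) = i := emb_inv n ℓ hn h1 h2 i hi
        have h' := hs (inv n ℓ hn h2 i)
        simp only [hrw] at h'
        have hyv : y i = w (inv n ℓ hn h2 i) := by rw [hy]; simp only [dif_neg hi]
        rw [hyv]
        exact h'
    · by_cases hi : i.val = ℓ - 1 <;> by_cases hj : j.val = ℓ - 1
      · have hieq : i = iℓ := by apply Fin.ext; exact hi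
        have hjeq : j = iℓ := by apply Fin.ext; exact hj
        rw [hieq, hjeq] at hlt
        exact absurd hlt (lt_irrefl _)
      · have hieq : i = iℓ := by apply Fin.ext; exact hi
        subst hieq
        have hrw : emb n ℓ (inv n ℓ hn h2 j) = j := emb_inv n ℓ hn h1 h2 j hj
        have hyv : y j = w (inv n ℓ hn h2 j) := by rw [hy]; simp only [dif_neg hj]
        rw [hyiℓ, hyv, ← hb, hzs.2.2]
        have hU := hmemU (inv n ℓ hn h2 j) (by rw [hrw]; exact hlt)
        have : val (inv n ℓ hn h2 j) = aff ⌊2 * x₀ j⌋ (w (inv n ℓ hn h2 j)) := by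
          simp only [hval, hrw]
        rw [this] at hU
        linarith
      · have hjeq : j = iℓ := by apply Fin.ext; exact hj
        subst hjeq
        have hrw : emb n ℓ (inv n ℓ hn h2 i) = i := emb_inv n ℓ hn h1 h2 i hi
        have hyv : y i = w (inv n ℓ hn h2 i) := by rw [hy]; simp only [dif_neg hi]
        rw [hyiℓ, hyv, ← hb, hzs.2.2]
        have hL := hmemL (inv n ℓ hn h2 i) (by rw [hrw]; exact hlt)
        have : val (inv n ℓ hn h2 i) = aff ⌊2 * x₀ i⌋ (w (inv n ℓ hn h2 i)) := by
          simp only [hval, hrw]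
        rw [this] at hL
        linarith
      · have hrwi : emb n ℓ (inv n ℓ hn h2 i) = i := emb_inv n ℓ hn h1 h2 i hi
        have hrwj : emb n ℓ (inv n ℓ hn h2 j) = j := emb_inv n ℓ hn h1 h2 j hj
        have hyvi : y i = w (inv n ℓ hn h2 i) := by rw [hy]; simp only [dif_neg hi]
        have hyvj : y j = w (inv n ℓ hn h2 j) := by rw [hy]; simp only [dif_neg hj]
        rw [hyvi, hyvj]
        have := ho (inv n ℓ hn h2 i) (inv n ℓ hn h2 j)
          (by simp only [hrwi, hrwj]; exact hlt)
        simp only [hrwi, hrwj] at this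
        exact this

end Stmt8A

/-- The projection onto the hyperplane `{v : v_ℓ = ⌈k/2n⌉}`, followed by the identification
of the hyperplane with `ℝⁿ⁻¹` via the basis `{εⱼ : j ≠ ℓ}`, maps every alcove of the type
`Cₙ` affine arrangement to an alcove of the type `C_{n-1}` affine arrangement. -/
theorem stmt8 (n k ℓ : ℕ) (hn : 2 ≤ n) (hk : 1 ≤ k) (h1 : 1 ≤ ℓ) (h2 : ℓ ≤ n)
    (c : ℝ) (hc : c = (((k + 2*n - 1)/(2*n) : ℕ) : ℝ))
    (A : Set (Fin n → ℝ)) (hA : IsAlcove n A) :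
    IsAlcove (n-1) ((fun x => delCoordR n ℓ (piMap n ℓ c x)) '' A) := by
  obtain ⟨x₀, hx₀, rfl⟩ := hA
  have hphi : (fun x => delCoordR n ℓ (piMap n ℓ c x)) =
      fun (x : Fin n → ℝ) (t : Fin (n-1)) => x (Stmt8A.emb n ℓ t) :=
    funext fun x => funext fun t => Stmt8A.phi_apply n ℓ c x t
  rw [hphi, Stmt8A.comp_eq_reg hx₀, Stmt8A.image_reg n ℓ hn h1 h2 x₀]
  exact ⟨fun t => x₀ (Stmt8A.emb n ℓ t), Stmt8A.proj_mem hx₀,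
    (Stmt8A.comp_eq_reg (Stmt8A.proj_mem hx₀)).symm⟩
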